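/- For every binary Λ-tree T and homogenized Λ,X-TVA A = (Q, ι, δ, F), there exists a complete structured DNNF C of width at most |Q| and depth O(height(T)), together with a mapping γ from pairs (node of T, state of Q) to gates of C, such that for every node n and state q and every valuation ν of the subtree rooted at n, the assignment α(ν) belongs to S(γ(n,q)) if and only if some run of A on that subtree under ν maps n to q. Moreover, C has size O(|T| · |A|). -/

import Mathlib

/-- Positions in binary trees (paths from the root; `false` = left, `true` = right). -/
abbrev BPos := List Bool

inductive GateType where
  | top | bot | var | times | cup
deriving DecidableEq

/-- A set circuit: a DAG of gates typed ⊤, ⊥, var, ×, ∪.  `wire g' g` means `g'` is an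
input of `g`. -/
structure SetCircuit (V G : Type) where
  gtype : G → GateType
  wire : G → G → Prop
  varLabel : G → Set V
  varLabel_inj : ∀ g g', gtype g = GateType.var → gtype g' = GateType.var →
      varLabel g = varLabel g' → g = g'
  source_no_input : ∀ g, (gtype g = GateType.top ∨ gtype g = GateType.bot ∨
      gtype g = GateType.var) → ∀ g', ¬ wire g' g
  const_no_output : ∀ g, (gtype g = GateType.top ∨ gtype g = GateType.bot) → ∀ g', ¬ wire g g'
  times_two : ∀ g, gtype g = GateType.times → ∃ g₁ g₂, g₁ ≠ g₂ ∧ wire g₁ g ∧ wire g₂ g ∧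
      ∀ g', wire g' g → g' = g₁ ∨ g' = g₂
  cup_one : ∀ g, gtype g = GateType.cup → ∃ g', wire g' g

/-- `Captures C g S` : the set `S` of variables belongs to the set `S(g)` captured by
gate `g`, following the inductive semantics of set circuits. -/
inductive Captures {V G : Type} (C : SetCircuit V G) : G → Set V → Prop
  | var {g} : C.gtype g = GateType.var → Captures C g (C.varLabel g)
  | top {g} : C.gtype g = GateType.top → Captures C g ∅
  | times {g g₁ g₂ S₁ S₂} : C.gtype g = GateType.times → C.wire g₁ g → C.wire g₂ g →
      g₁ ≠ g₂ → Captures C g₁ S₁ → Captures C g₂ S₂ → Captures C g (S₁ ∪ S₂)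
  | cup {g g' S} : C.gtype g = GateType.cup → C.wire g' g → Captures C g' S → Captures C g S

/-- `CupPath C g' g` : there is a wire-path from `g'` to `g` all of whose gates strictly
between `g'` and `g` are ∪-gates. -/
inductive CupPath {V G : Type} (C : SetCircuit V G) : G → G → Prop
  | single {g' g} : C.wire g' g → CupPath C g' g
  | cons {g' m g} : C.wire g' m → C.gtype m = GateType.cup → CupPath C m g → CupPath C g' g

/-- A v-tree: a binary tree whose leaves are labeled by sets of variables. -/
inductive VTree (V : Type) where
  | leaf (vars : Set V)
  | node (l r : VTree V)

/-- The subtree of a v-tree at a position (if any). -/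
def VTree.sub {V : Type} : VTree V → BPos → Option (VTree V)
  | t, [] => some t
  | VTree.leaf _, _ :: _ => none
  | VTree.node l r, b :: p => VTree.sub (if b then r else l) p

/-- Variables occurring in (the leaves of) a v-tree. -/
def VTree.vars {V : Type} : VTree V → Set V
  | VTree.leaf vs => vs
  | VTree.node l r => l.vars ∪ r.vars

/-- Variables occurring below a given position of a v-tree. -/
def VTree.varsAt {V : Type} (t : VTree V) (p : BPos) : Set V :=
  match t.sub p with
  | some s => s.vars
  | none => ∅

/-- A complete structured DNNF: a set circuit together with a v-tree and a structuring
function `σ` mapping each gate to a (valid) position of the v-tree (its box). -/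
structure StructuredDNNF (V G : Type) extends SetCircuit V G where
  vtree : VTree V
  σ : G → BPos
  σ_valid : ∀ g, (vtree.sub (σ g)).isSome
  var_leaf : ∀ g, gtype g = GateType.var →
      ∃ vs, vtree.sub (σ g) = some (VTree.leaf vs) ∧ varLabel g ⊆ vs
  var_nonempty : ∀ g, gtype g = GateType.var → (varLabel g).Nonempty
  wire_struct : ∀ g' g, wire g' g →
      σ g' = σ g ∨ (gtype g' = GateType.cup ∧ ∃ b, σ g' = σ g ++ [b])
  times_children : ∀ g, gtype g = GateType.times →
      (∃ g₁, wire g₁ g ∧ σ g₁ = σ g ++ [false]) ∧ (∃ g₂, wire g₂ g ∧ σ g₂ = σ g ++ [true])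
  leaves_disjoint : ∀ p₁ p₂ vs₁ vs₂, vtree.sub p₁ = some (VTree.leaf vs₁) →
      vtree.sub p₂ = some (VTree.leaf vs₂) → p₁ ≠ p₂ → Disjoint vs₁ vs₂

/-- A tree variable automaton over binary trees. -/
structure TVA (L X Q : Type) where
  init : L → Set X → Q → Prop
  trans : L → Q → Q → Q → Prop
  final : Q → Prop

/-- Binary labeled trees. -/
inductive BTree (L : Type) where
  | leaf (l : L)
  | node (l : L) (t₁ t₂ : BTree L)

/-- The subtree of a binary tree at a position. -/
def BTree.subt {L : Type} : BTree L → BPos → Option (BTree L)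
  | t, [] => some t
  | BTree.leaf _, _ :: _ => none
  | BTree.node _ t₁ t₂, b :: p => BTree.subt (if b then t₂ else t₁) p

def BTree.size {L : Type} : BTree L → ℕ
  | BTree.leaf _ => 1
  | BTree.node _ t₁ t₂ => t₁.size + t₂.size + 1

def BTree.height {L : Type} : BTree L → ℕ
  | BTree.leaf _ => 0
  | BTree.node _ t₁ t₂ => max t₁.height t₂.height + 1

/-- `ReachAbs A ν t p q` : there is a run of `A` on the subtree `t` (sitting at absolute
position `p`) under the valuation `ν` (read at absolute leaf positions) mapping the
root of `t` to state `q`. -/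
inductive ReachAbs {L X Q : Type} (A : TVA L X Q) (ν : BPos → Set X) :
    BTree L → BPos → Q → Prop
  | leaf {l p q} : A.init l (ν p) q → ReachAbs A ν (BTree.leaf l) p q
  | node {l t₁ t₂ p q₁ q₂ q} : ReachAbs A ν t₁ (p ++ [false]) q₁ →
      ReachAbs A ν t₂ (p ++ [true]) q₂ → A.trans l q₁ q₂ q →
      ReachAbs A ν (BTree.node l t₁ t₂) p q

/-- `q` is a 0-state. -/
def ZeroState {L X Q : Type} (A : TVA L X Q) (q : Q) : Prop :=
  ∃ t : BTree L, ReachAbs A (fun _ => (∅ : Set X)) t [] q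

/-- `q` is a 1-state. -/
def OneState {L X Q : Type} (A : TVA L X Q) (q : Q) : Prop :=
  ∃ (t : BTree L) (ν : BPos → Set X), ReachAbs A ν t [] q ∧
    ∃ (p : BPos) (l : L), t.subt p = some (BTree.leaf l) ∧ (ν p).Nonempty

/-- `A` is homogenized. -/
def Homogenized {L X Q : Type} (A : TVA L X Q) : Prop :=
  ∀ q : Q, (ZeroState A q ∨ OneState A q) ∧ ¬ (ZeroState A q ∧ OneState A q)

/-- The v-tree obtained from `T`: same shape as `T`, each leaf at position `p` labeled
by the set of singletons `⟨Z : p⟩`, i.e. `{(z, p) | z : X}`. -/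
def vtreeOf {L : Type} (X : Type) : BTree L → BPos → VTree (X × BPos)
  | BTree.leaf _, p => VTree.leaf {zq : X × BPos | zq.2 = p}
  | BTree.node _ t₁ t₂, p =>
      VTree.node (vtreeOf X t₁ (p ++ [false])) (vtreeOf X t₂ (p ++ [true]))

/-- The assignment `α(ν)` of the valuation `ν` restricted to the subtree of `T` rooted
at `p`: the singletons `⟨Z : n⟩` for leaves `n` below `p` with `Z ∈ ν n`. -/
def assignBelow {L X : Type} (T : BTree L) (p : BPos) (ν : BPos → Set X) :
    Set (X × BPos) :=
  {zq : X × BPos | p <+: zq.2 ∧ (∃ l : L, T.subt zq.2 = some (BTree.leaf l)) ∧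
    zq.1 ∈ ν zq.2}

/-- `WirePath C g g' n` : a directed path of `n` wires from `g` to `g'`. -/
inductive WirePath {V G : Type} (C : SetCircuit V G) : G → G → ℕ → Prop
  | refl {g} : WirePath C g g 0
  | step {g m g' n} : C.wire g m → WirePath C m g' n → WirePath C g g' (n + 1)

section Aux

variable {L X Q : Type}

lemma subt_append (T : BTree L) (p r : BPos) :
    T.subt (p ++ r) = (T.subt p).bind (fun t => t.subt r) := by
  induction p generalizing T with
  | nil => simp [BTree.subt]
  | cons b p ih => cases T <;> simp [BTree.subt, ih]

lemma length_le_height : ∀ (T : BTree L) (p : BPos), (T.subt p).isSome → p.length ≤ T.height := by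
  intro T
  induction T with
  | leaf l => intro p hp; cases p with
    | nil => simp
    | cons b p => simp [BTree.subt] at hp
  | node l t₁ t₂ ih₁ ih₂ =>
    intro p hp; cases p with
    | nil => simp
    | cons b p =>
      simp only [BTree.subt] at hp
      cases b with
      | false =>
        have := ih₁ p (by simpa using hp)
        simp only [List.length_cons, BTree.height]; omega
      | true =>
        have := ih₂ p (by simpa using hp)
        simp only [List.length_cons, BTree.height]; omega

lemma vtreeOf_sub (X : Type) : ∀ (p : BPos) (t : BTree L) (r : BPos) (t' : BTree L),
    t.subt p = some t' → (vtreeOf X t r).sub p = some (vtreeOf X t' (r ++ p)) := by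
  intro p
  induction p with
  | nil => intro t r t' h; simp [BTree.subt] at h; subst h; simp [VTree.sub]
  | cons b p ih =>
    intro t r t' h
    cases t with
    | leaf l => simp [BTree.subt] at h
    | node l t₁ t₂ =>
      simp only [BTree.subt] at h
      cases b with
      | false =>
        have := ih t₁ (r ++ [false]) t' (by simpa using h)
        simp only [vtreeOf, VTree.sub]
        rw [if_neg (by decide : ¬ (false = true)), this]; simp
      | true =>
        have := ih t₂ (r ++ [true]) t' (by simpa using h)
        simp only [vtreeOf, VTree.sub]
        rw [if_pos trivial, this]; simp

lemma vtreeOf_sub_leaf (X : Type) : ∀ (t : BTree L) (r p : BPos) (vs : Set (X × BPos)),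
    (vtreeOf X t r).sub p = some (VTree.leaf vs) → vs = {zq : X × BPos | zq.2 = r ++ p} := by
  intro t
  induction t with
  | leaf l =>
    intro r p vs h
    cases p with
    | nil => simp [vtreeOf, VTree.sub] at h; subst h; simp
    | cons b p => simp [vtreeOf, VTree.sub] at h
  | node l t₁ t₂ ih₁ ih₂ =>
    intro r p vs h
    cases p with
    | nil => simp [vtreeOf, VTree.sub] at h
    | cons b p =>
      simp only [vtreeOf, VTree.sub] at h
      cases b with
      | false =>
        have := ih₁ (r ++ [false]) p vs (by simpa using h)
        rw [this]; simp
      | true =>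
        have := ih₂ (r ++ [true]) p vs (by simpa using h)
        rw [this]; simp

lemma reach_congr {A : TVA L X Q} {ν ν' : BPos → Set X} :
    ∀ {t : BTree L} {p : BPos} {q : Q}, ReachAbs A ν t p q →
    (∀ r l', t.subt r = some (BTree.leaf l') → ν' (p ++ r) = ν (p ++ r)) →
    ReachAbs A ν' t p q := by
  intro t p q h
  induction h with
  | @leaf l p q hi =>
    intro hag
    refine ReachAbs.leaf ?_
    have := hag [] l rfl
    simp only [List.append_nil] at this
    rw [this]; exact hi
  | @node l t₁ t₂ p q₁ q₂ q h1 h2 htr ih1 ih2 =>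
    intro hag
    refine ReachAbs.node (ih1 ?_) (ih2 ?_) htr
    · intro r l' hr
      have := hag (false :: r) l' (by simpa [BTree.subt] using hr)
      simpa [List.append_assoc] using this
    · intro r l' hr
      have := hag (true :: r) l' (by simpa [BTree.subt] using hr)
      simpa [List.append_assoc] using this

lemma reach_shift {A : TVA L X Q} {ν : BPos → Set X} (s : BPos) :
    ∀ (t : BTree L) (p : BPos) (q : Q),
    ReachAbs A ν t (s ++ p) q ↔ ReachAbs A (fun r => ν (s ++ r)) t p q := by
  intro t
  induction t with
  | leaf l =>
    intro p q
    constructor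
    · intro h; cases h with | leaf h => exact ReachAbs.leaf h
    · intro h; cases h with | leaf h => exact ReachAbs.leaf h
  | node l t₁ t₂ ih₁ ih₂ =>
    intro p q
    constructor
    · intro h
      cases h with
      | node h1 h2 htr =>
        exact ReachAbs.node ((ih₁ _ _).1 (by simpa [List.append_assoc] using h1))
          ((ih₂ _ _).1 (by simpa [List.append_assoc] using h2)) htr
    · intro h
      cases h with
      | node h1 h2 htr =>
        exact ReachAbs.node (by simpa [List.append_assoc] using (ih₁ _ _).2 h1)
          (by simpa [List.append_assoc] using (ih₂ _ _).2 h2) htr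

end Aux
section Aux2

variable {L X Q : Type}

lemma assign_leaf {T : BTree L} {p : BPos} {l : L} (hp : T.subt p = some (BTree.leaf l))
    (ν : BPos → Set X) :
    assignBelow T p ν = {zq : X × BPos | zq.1 ∈ ν p ∧ zq.2 = p} := by
  ext ⟨z, n⟩
  simp only [assignBelow, Set.mem_setOf_eq]
  constructor
  · rintro ⟨⟨r, hr⟩, ⟨l', hl'⟩, hz⟩
    cases r with
    | nil => subst hr; simp only [List.append_nil] at hz ⊢; exact ⟨hz, by simp⟩
    | cons b r' =>
      exfalso
      subst hr
      rw [subt_append, hp] at hl'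
      simp [BTree.subt] at hl'
  · rintro ⟨hz, h⟩
    subst h
    exact ⟨List.prefix_refl _, ⟨l, hp⟩, hz⟩

lemma assign_node {T : BTree L} {p : BPos} {l : L} {t₁ t₂ : BTree L}
    (hp : T.subt p = some (BTree.node l t₁ t₂)) (ν : BPos → Set X) :
    assignBelow T p ν =
      assignBelow T (p ++ [false]) ν ∪ assignBelow T (p ++ [true]) ν := by
  ext ⟨z, n⟩
  simp only [assignBelow, Set.mem_setOf_eq, Set.mem_union]
  constructor
  · rintro ⟨⟨r, hr⟩, hleaf, hz⟩
    cases r with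
    | nil =>
      exfalso
      subst hr
      simp only [List.append_nil] at hleaf
      obtain ⟨l', hl'⟩ := hleaf
      rw [hp] at hl'; simp at hl'
    | cons b r' =>
      subst hr
      cases b with
      | false => exact Or.inl ⟨⟨r', by simp⟩, hleaf, hz⟩
      | true => exact Or.inr ⟨⟨r', by simp⟩, hleaf, hz⟩
  · rintro (⟨hpre, hleaf, hz⟩ | ⟨hpre, hleaf, hz⟩)
    · exact ⟨(List.prefix_append p [false]).trans hpre, hleaf, hz⟩
    · exact ⟨(List.prefix_append p [true]).trans hpre, hleaf, hz⟩

lemma assign_nu_empty {T : BTree L} {p : BPos} {t : BTree L} (hp : T.subt p = some t)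
    {ν : BPos → Set X} (h : assignBelow T p ν = ∅) :
    ∀ r l', t.subt r = some (BTree.leaf l') → ν (p ++ r) = ∅ := by
  intro r l' hr
  by_contra hne
  obtain ⟨z, hz⟩ := Set.nonempty_iff_ne_empty.2 hne
  have : (z, p ++ r) ∈ assignBelow T p ν := by
    refine ⟨List.prefix_append p r, ⟨l', ?_⟩, hz⟩
    rw [subt_append, hp]; simpa using hr
  rw [h] at this; exact this

/-- run with empty assignment gives run with the all-empty valuation -/
lemma reach_to_empty {A : TVA L X Q} {T : BTree L} {p : BPos} {t : BTree L}
    (hp : T.subt p = some t) {ν : BPos → Set X} {q : Q}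
    (hr : ReachAbs A ν t p q) (h : assignBelow T p ν = ∅) :
    ReachAbs A (fun _ => (∅ : Set X)) t p q := by
  refine reach_congr hr ?_
  intro r l' hrl
  exact (assign_nu_empty hp h r l' hrl).symm

lemma reach_root_of_pos {A : TVA L X Q} {ν : BPos → Set X} {t : BTree L} {p : BPos} {q : Q}
    (h : ReachAbs A ν t p q) : ReachAbs A (fun r => ν (p ++ r)) t [] q := by
  have := (reach_shift (A := A) (ν := ν) p t [] q).1
  simp only [List.append_nil] at this
  exact this h

lemma zeroState_of_reach {A : TVA L X Q} {T : BTree L} {p : BPos} {t : BTree L}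
    (hp : T.subt p = some t) {ν : BPos → Set X} {q : Q}
    (hr : ReachAbs A ν t p q) (h : assignBelow T p ν = ∅) : ZeroState A q := by
  have h1 := reach_to_empty hp hr h
  have h2 := reach_root_of_pos h1
  exact ⟨t, h2⟩

lemma oneState_of_reach {A : TVA L X Q} {T : BTree L} {p : BPos} {t : BTree L}
    (hp : T.subt p = some t) {ν : BPos → Set X} {q : Q}
    (hr : ReachAbs A ν t p q) (h : (assignBelow T p ν).Nonempty) : OneState A q := by
  obtain ⟨⟨z, n⟩, ⟨⟨r, hrr⟩, ⟨l', hl'⟩, hz⟩⟩ := h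
  subst hrr
  refine ⟨t, fun r => ν (p ++ r), reach_root_of_pos hr, r, l', ?_, ⟨z, hz⟩⟩
  rw [subt_append, hp] at hl'
  simpa using hl'

lemma empty_assign_of_zero {A : TVA L X Q} (hA : Homogenized A) {T : BTree L} {p : BPos}
    {t : BTree L} (hp : T.subt p = some t) {ν : BPos → Set X} {q : Q}
    (hr : ReachAbs A ν t p q) (hz : ZeroState A q) : assignBelow T p ν = ∅ := by
  by_contra hne
  have := oneState_of_reach hp hr (Set.nonempty_iff_ne_empty.2 hne)
  exact (hA q).2 ⟨hz, this⟩

lemma nonempty_assign_of_one {A : TVA L X Q} (hA : Homogenized A) {T : BTree L} {p : BPos}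
    {t : BTree L} (hp : T.subt p = some t) {ν : BPos → Set X} {q : Q}
    (hr : ReachAbs A ν t p q) (ho : OneState A q) : (assignBelow T p ν).Nonempty := by
  rw [Set.nonempty_iff_ne_empty]
  intro h
  exact (hA q).2 ⟨zeroState_of_reach hp hr h, ho⟩

end Aux2
section Circ

variable {L X Q : Type}

inductive GK (X Q : Type) where
  | gam (q : Q)
  | tp
  | vr (S : Set X)
  | tm (q₁ q₂ : Q)

def EmptyReach (A : TVA L X Q) (T : BTree L) (p : BPos) (q : Q) : Prop :=
  ∃ t, T.subt p = some t ∧ ReachAbs A (fun _ => (∅ : Set X)) t p q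

def Live (A : TVA L X Q) (T : BTree L) (p : BPos) (q : Q) : Prop :=
  ∃ t ν, T.subt p = some t ∧ ReachAbs A ν t p q

def LiveOne (A : TVA L X Q) (T : BTree L) (p : BPos) (q : Q) : Prop :=
  Live A T p q ∧ OneState A q

def GValid (A : TVA L X Q) (T : BTree L) : BPos × GK X Q → Prop
  | (p, GK.gam q) => LiveOne A T p q
  | (p, GK.tp) => (T.subt p).isSome
  | (p, GK.vr S) => ∃ l, T.subt p = some (BTree.leaf l) ∧ S.Nonempty ∧ ∃ q, A.init l S q
  | (p, GK.tm q₁ q₂) => ∃ l t₁ t₂, T.subt p = some (BTree.node l t₁ t₂) ∧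
      LiveOne A T (p ++ [false]) q₁ ∧ LiveOne A T (p ++ [true]) q₂ ∧ ∃ q, A.trans l q₁ q₂ q

def WireR (A : TVA L X Q) (T : BTree L) (x' x : BPos × GK X Q) : Prop :=
  (∃ p S q l, x' = (p, GK.vr S) ∧ x = (p, GK.gam q) ∧
      T.subt p = some (BTree.leaf l) ∧ A.init l S q) ∨
  (∃ p q₁ q₂ q l t₁ t₂, x' = (p, GK.tm q₁ q₂) ∧ x = (p, GK.gam q) ∧
      T.subt p = some (BTree.node l t₁ t₂) ∧ A.trans l q₁ q₂ q) ∨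
  (∃ p q' q l t₁ t₂ q₂, x' = (p ++ [false], GK.gam q') ∧ x = (p, GK.gam q) ∧
      T.subt p = some (BTree.node l t₁ t₂) ∧ A.trans l q' q₂ q ∧
      EmptyReach A T (p ++ [true]) q₂) ∨
  (∃ p q' q l t₁ t₂ q₁, x' = (p ++ [true], GK.gam q') ∧ x = (p, GK.gam q) ∧
      T.subt p = some (BTree.node l t₁ t₂) ∧ A.trans l q₁ q' q ∧
      EmptyReach A T (p ++ [false]) q₁) ∨
  (∃ p q₁ q₂, x' = (p ++ [false], GK.gam q₁) ∧ x = (p, GK.tm q₁ q₂)) ∨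
  (∃ p q₁ q₂, x' = (p ++ [true], GK.gam q₂) ∧ x = (p, GK.tm q₁ q₂))

abbrev GT (A : TVA L X Q) (T : BTree L) : Type :=
  Option {x : BPos × GK X Q // GValid A T x}

def gkType : GK X Q → GateType
  | GK.gam _ => GateType.cup
  | GK.tp => GateType.top
  | GK.vr _ => GateType.var
  | GK.tm _ _ => GateType.times

def gType (A : TVA L X Q) (T : BTree L) : GT A T → GateType
  | none => GateType.bot
  | some x => gkType x.1.2

def gLabel (A : TVA L X Q) (T : BTree L) : GT A T → Set (X × BPos)
  | some ⟨(p, GK.vr S), _⟩ => {zq : X × BPos | zq.1 ∈ S ∧ zq.2 = p}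
  | _ => ∅

def gWire (A : TVA L X Q) (T : BTree L) : GT A T → GT A T → Prop
  | some x', some x => WireR A T x'.1 x.1
  | _, _ => False

lemma gWire_some {A : TVA L X Q} {T : BTree L} {g' g : GT A T} (h : gWire A T g' g) :
    ∃ x' x, g' = some x' ∧ g = some x ∧ WireR A T x'.1 x.1 := by
  match g', g with
  | some x', some x => exact ⟨x', x, rfl, rfl, h⟩
  | none, _ => exact absurd h (by simp [gWire])
  | some _, none => exact absurd h (by simp [gWire])

lemma gtype_var_shape {A : TVA L X Q} {T : BTree L} {g : GT A T}
    (h : gType A T g = GateType.var) : ∃ p S hv, g = some ⟨(p, GK.vr S), hv⟩ := by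
  match g with
  | none => simp [gType] at h
  | some ⟨(p, GK.gam q), hv⟩ => simp [gType, gkType] at h
  | some ⟨(p, GK.tp), hv⟩ => simp [gType, gkType] at h
  | some ⟨(p, GK.vr S), hv⟩ => exact ⟨p, S, hv, rfl⟩
  | some ⟨(p, GK.tm q₁ q₂), hv⟩ => simp [gType, gkType] at h

lemma gtype_cup_shape {A : TVA L X Q} {T : BTree L} {g : GT A T}
    (h : gType A T g = GateType.cup) : ∃ p q hv, g = some ⟨(p, GK.gam q), hv⟩ := by
  match g with
  | none => simp [gType] at h
  | some ⟨(p, GK.gam q), hv⟩ => exact ⟨p, q, hv, rfl⟩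
  | some ⟨(p, GK.tp), hv⟩ => simp [gType, gkType] at h
  | some ⟨(p, GK.vr S), hv⟩ => simp [gType, gkType] at h
  | some ⟨(p, GK.tm q₁ q₂), hv⟩ => simp [gType, gkType] at h

lemma gtype_times_shape {A : TVA L X Q} {T : BTree L} {g : GT A T}
    (h : gType A T g = GateType.times) : ∃ p q₁ q₂ hv, g = some ⟨(p, GK.tm q₁ q₂), hv⟩ := by
  match g with
  | none => simp [gType] at h
  | some ⟨(p, GK.gam q), hv⟩ => simp [gType, gkType] at h
  | some ⟨(p, GK.tp), hv⟩ => simp [gType, gkType] at h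
  | some ⟨(p, GK.vr S), hv⟩ => simp [gType, gkType] at h
  | some ⟨(p, GK.tm q₁ q₂), hv⟩ => exact ⟨p, q₁, q₂, hv, rfl⟩

lemma subt_child_false {T : BTree L} {p : BPos} {l : L} {t₁ t₂ : BTree L}
    (hp : T.subt p = some (BTree.node l t₁ t₂)) : T.subt (p ++ [false]) = some t₁ := by
  rw [subt_append, hp]; simp [BTree.subt]

lemma subt_child_true {T : BTree L} {p : BPos} {l : L} {t₁ t₂ : BTree L}
    (hp : T.subt p = some (BTree.node l t₁ t₂)) : T.subt (p ++ [true]) = some t₂ := by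
  rw [subt_append, hp]; simp [BTree.subt]

lemma not_emptyReach_of_liveOne {A : TVA L X Q} (hA : Homogenized A) {T : BTree L}
    {p : BPos} {q : Q} (h : LiveOne A T p q) : ¬ EmptyReach A T p q := by
  rintro ⟨t, hp, hr⟩
  have hz : ZeroState A q := ⟨t, reach_root_of_pos hr⟩
  exact (hA q).2 ⟨hz, h.2⟩

/-- zero + live implies empty-reachable -/
lemma emptyReach_of_zero_live {A : TVA L X Q} (hA : Homogenized A) {T : BTree L}
    {p : BPos} {t : BTree L} (hp : T.subt p = some t) {ν : BPos → Set X} {q : Q}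
    (hr : ReachAbs A ν t p q) (hz : ZeroState A q) : EmptyReach A T p q :=
  ⟨t, hp, reach_to_empty hp hr (empty_assign_of_zero hA hp hr hz)⟩

end Circ
section Circ2

variable {L X Q : Type}

def circ (A : TVA L X Q) (T : BTree L) (hA : Homogenized A) :
    SetCircuit (X × BPos) (GT A T) where
  gtype := gType A T
  wire := gWire A T
  varLabel := gLabel A T
  varLabel_inj := by
    intro g g' hg hg' heq
    obtain ⟨p, S, hv, hgeq⟩ := gtype_var_shape hg
    obtain ⟨p', S', hv', hgeq'⟩ := gtype_var_shape hg'
    subst hgeq; subst hgeq'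
    obtain ⟨l, hp, ⟨z, hz⟩, -⟩ := id hv
    have hlab : {zq : X × BPos | zq.1 ∈ S ∧ zq.2 = p} =
        {zq : X × BPos | zq.1 ∈ S' ∧ zq.2 = p'} := heq
    have hzp : (z, p) ∈ {zq : X × BPos | zq.1 ∈ S' ∧ zq.2 = p'} := by
      rw [← hlab]; exact ⟨hz, rfl⟩
    obtain ⟨-, rfl⟩ := hzp
    have hSS : S = S' := by
      ext z'
      constructor
      · intro h; exact ((Set.ext_iff.1 hlab (z', p)).1 ⟨h, rfl⟩).1
      · intro h; exact ((Set.ext_iff.1 hlab (z', p)).2 ⟨h, rfl⟩).1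
    subst hSS
    rfl
  source_no_input := by
    intro g hg g' hw
    obtain ⟨x', x, rfl, rfl, hR⟩ := gWire_some hw
    rcases hR with ⟨p, S, q, l, h1, h2, -⟩ | ⟨p, q₁, q₂, q, l, t₁, t₂, h1, h2, -⟩ |
      ⟨p, q', q, l, t₁, t₂, q₂, h1, h2, -⟩ | ⟨p, q', q, l, t₁, t₂, q₁, h1, h2, -⟩ |
      ⟨p, q₁, q₂, h1, h2⟩ | ⟨p, q₁, q₂, h1, h2⟩ <;>
    · simp only [gType] at hg
      rw [h2] at hg
      simp [gkType] at hg
  const_no_output := by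
    intro g hg g' hw
    obtain ⟨x', x, rfl, rfl, hR⟩ := gWire_some hw
    rcases hR with ⟨p, S, q, l, h1, h2, -⟩ | ⟨p, q₁, q₂, q, l, t₁, t₂, h1, h2, -⟩ |
      ⟨p, q', q, l, t₁, t₂, q₂, h1, h2, -⟩ | ⟨p, q', q, l, t₁, t₂, q₁, h1, h2, -⟩ |
      ⟨p, q₁, q₂, h1, h2⟩ | ⟨p, q₁, q₂, h1, h2⟩ <;>
    · simp only [gType] at hg
      rw [h1] at hg
      simp [gkType] at hg
  times_two := by
    intro g hg
    obtain ⟨p, q₁, q₂, hv, rfl⟩ := gtype_times_shape hg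
    obtain ⟨l, t₁, t₂, hp, hL1, hL2, -⟩ := hv
    refine ⟨some ⟨(p ++ [false], GK.gam q₁), hL1⟩, some ⟨(p ++ [true], GK.gam q₂), hL2⟩,
      ?_, ?_, ?_, ?_⟩
    · intro h
      simp only [Option.some.injEq, Subtype.mk.injEq, Prod.mk.injEq] at h
      have := congrArg (fun x : {x : BPos × GK X Q // GValid A T x} => x.1.1) h
      simp at this
    · exact Or.inr (Or.inr (Or.inr (Or.inr (Or.inl ⟨p, q₁, q₂, rfl, rfl⟩))))
    · exact Or.inr (Or.inr (Or.inr (Or.inr (Or.inr ⟨p, q₁, q₂, rfl, rfl⟩))))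
    · intro g' hw
      obtain ⟨x', x, rfl, hx, hR⟩ := gWire_some hw
      have hx1 : x.1 = (p, GK.tm q₁ q₂) := by
        have := congrArg (fun o => o.map Subtype.val) hx
        simpa using this.symm
      rcases hR with ⟨p', S, q, l', h1, h2, -⟩ | ⟨p', q₁', q₂', q, l', t₁', t₂', h1, h2, -⟩ |
        ⟨p', q', q, l', t₁', t₂', qq, h1, h2, -⟩ | ⟨p', q', q, l', t₁', t₂', qq, h1, h2, -⟩ |
        ⟨p', q₁', q₂', h1, h2⟩ | ⟨p', q₁', q₂', h1, h2⟩ <;>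
        rw [hx1] at h2 <;>
        [skip; skip; skip; skip;
         (exact Or.inl (by
            obtain ⟨rfl, h3⟩ := Prod.mk.injEq .. ▸ h2
            cases h3
            exact Option.some_inj.2 (Subtype.ext h1)));
         (exact Or.inr (by
            obtain ⟨rfl, h3⟩ := Prod.mk.injEq .. ▸ h2
            cases h3
            exact Option.some_inj.2 (Subtype.ext h1)))] <;>
        · exfalso
          obtain ⟨-, h3⟩ := Prod.mk.injEq .. ▸ h2
          cases h3
  cup_one := by
    intro g hg
    obtain ⟨p, q, hv, rfl⟩ := gtype_cup_shape hg
    obtain ⟨⟨t, ν, hp, hr⟩, hone⟩ := hv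
    cases t with
    | leaf l =>
      cases hr with
      | leaf hinit =>
        have hne : (ν p).Nonempty := by
          have h1 := nonempty_assign_of_one hA hp (ReachAbs.leaf hinit) hone
          rw [assign_leaf hp] at h1
          obtain ⟨⟨z, n⟩, hz, -⟩ := h1
          exact ⟨z, hz⟩
        refine ⟨some ⟨(p, GK.vr (ν p)), ⟨l, hp, hne, q, hinit⟩⟩, ?_⟩
        exact Or.inl ⟨p, ν p, q, l, rfl, rfl, hp, hinit⟩
    | node l t₁ t₂ =>
      cases hr with
      | @node _ _ _ _ q₁ q₂ _ h1 h2 htr =>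
        have hp1 : T.subt (p ++ [false]) = some t₁ := subt_child_false hp
        have hp2 : T.subt (p ++ [true]) = some t₂ := subt_child_true hp
        have hL1 : Live A T (p ++ [false]) q₁ := ⟨t₁, ν, hp1, h1⟩
        have hL2 : Live A T (p ++ [true]) q₂ := ⟨t₂, ν, hp2, h2⟩
        rcases (hA q₁).1 with hz1 | ho1
        · rcases (hA q₂).1 with hz2 | ho2
          · exfalso
            have e1 := empty_assign_of_zero hA hp1 h1 hz1
            have e2 := empty_assign_of_zero hA hp2 h2 hz2
            have : assignBelow T p ν = ∅ := by
              rw [assign_node hp, e1, e2]; simp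
            exact (hA q).2 ⟨zeroState_of_reach hp (ReachAbs.node h1 h2 htr) this, hone⟩
          · refine ⟨some ⟨(p ++ [true], GK.gam q₂), ⟨hL2, ho2⟩⟩, ?_⟩
            exact Or.inr (Or.inr (Or.inr (Or.inl ⟨p, q₂, q, l, t₁, t₂, q₁, rfl, rfl, hp, htr,
              emptyReach_of_zero_live hA hp1 h1 hz1⟩)))
        · rcases (hA q₂).1 with hz2 | ho2
          · refine ⟨some ⟨(p ++ [false], GK.gam q₁), ⟨hL1, ho1⟩⟩, ?_⟩
            exact Or.inr (Or.inr (Or.inl ⟨p, q₁, q, l, t₁, t₂, q₂, rfl, rfl, hp, htr,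
              emptyReach_of_zero_live hA hp2 h2 hz2⟩))
          · refine ⟨some ⟨(p, GK.tm q₁ q₂), ⟨l, t₁, t₂, hp, ⟨hL1, ho1⟩, ⟨hL2, ho2⟩, q, htr⟩⟩, ?_⟩
            exact Or.inr (Or.inl ⟨p, q₁, q₂, q, l, t₁, t₂, rfl, rfl, hp, htr⟩)

end Circ2
section Inv

variable {L X Q : Type} {A : TVA L X Q} {T : BTree L} {hA : Homogenized A}

lemma wireR_box {x' x : BPos × GK X Q} (h : WireR A T x' x) :
    x'.1 = x.1 ∨ ∃ b, x'.1 = x.1 ++ [b] := by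
  rcases h with ⟨p, S, q, l, h1, h2, -⟩ | ⟨p, q₁, q₂, q, l, t₁, t₂, h1, h2, -⟩ |
    ⟨p, q', q, l, t₁, t₂, q₂, h1, h2, -⟩ | ⟨p, q', q, l, t₁, t₂, q₁, h1, h2, -⟩ |
    ⟨p, q₁, q₂, h1, h2⟩ | ⟨p, q₁, q₂, h1, h2⟩ <;> subst h1 <;> subst h2
  · exact Or.inl rfl
  · exact Or.inl rfl
  · exact Or.inr ⟨false, rfl⟩
  · exact Or.inr ⟨true, rfl⟩
  · exact Or.inr ⟨false, rfl⟩
  · exact Or.inr ⟨true, rfl⟩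

lemma captures_none (S : Set (X × BPos)) : ¬ Captures (circ A T hA) none S := by
  intro h
  cases h with
  | var h => simp [circ, gType] at h
  | top h => simp [circ, gType] at h
  | times h => simp [circ, gType] at h
  | cup h hw hc => simp [circ, gType] at h

lemma captures_top_eq {p : BPos} {hv : GValid A T (p, GK.tp)} {S : Set (X × BPos)}
    (h : Captures (circ A T hA) (some ⟨(p, GK.tp), hv⟩) S) : S = ∅ := by
  cases h with
  | var h => simp [circ, gType, gkType] at h
  | top h => rfl
  | times h => simp [circ, gType, gkType] at h
  | cup h hw hc => simp [circ, gType, gkType] at h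

lemma captures_var_eq {p : BPos} {S₀ : Set X} {hv : GValid A T (p, GK.vr S₀)}
    {S : Set (X × BPos)}
    (h : Captures (circ A T hA) (some ⟨(p, GK.vr S₀), hv⟩) S) :
    S = {zq : X × BPos | zq.1 ∈ S₀ ∧ zq.2 = p} := by
  cases h with
  | var h => rfl
  | top h => simp [circ, gType, gkType] at h
  | times h => simp [circ, gType, gkType] at h
  | cup h hw hc => simp [circ, gType, gkType] at h

lemma captures_cup_inv {p : BPos} {q : Q} {hv : GValid A T (p, GK.gam q)}
    {S : Set (X × BPos)}
    (h : Captures (circ A T hA) (some ⟨(p, GK.gam q), hv⟩) S) :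
    ∃ g', gWire A T g' (some ⟨(p, GK.gam q), hv⟩) ∧ Captures (circ A T hA) g' S := by
  cases h with
  | var h => simp [circ, gType, gkType] at h
  | top h => simp [circ, gType, gkType] at h
  | times h => simp [circ, gType, gkType] at h
  | cup h hw hc => exact ⟨_, hw, hc⟩

lemma captures_prefix {g : GT A T} {S : Set (X × BPos)}
    (h : Captures (circ A T hA) g S) :
    ∀ x, g = some x → ∀ zq ∈ S, x.1.1 <+: zq.2 := by
  induction h with
  | @var g hgt =>
    intro x hx zq hzq
    obtain ⟨p, S₀, hv, rfl⟩ := gtype_var_shape (g := g) hgt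
    cases hx
    have : gLabel A T (some ⟨(p, GK.vr S₀), hv⟩) = {zq : X × BPos | zq.1 ∈ S₀ ∧ zq.2 = p} := rfl
    rw [show (circ A T hA).varLabel = gLabel A T from rfl, this] at hzq
    obtain ⟨-, h2⟩ := hzq
    rw [h2]
  | top => intro x hx zq hzq; exact absurd hzq (Set.notMem_empty zq)
  | @times g g₁ g₂ S₁ S₂ hgt hw1 hw2 hne hc1 hc2 ih1 ih2 =>
    intro x hx zq hzq
    subst hx
    rcases hzq with hzq | hzq
    · obtain ⟨x₁, x₀, rfl, hx0, hR⟩ := gWire_some hw1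
      rw [Option.some_inj] at hx0
      subst hx0
      have hb := wireR_box hR
      have h1 := ih1 x₁ rfl zq hzq
      rcases hb with hb | ⟨b, hb⟩
      · rwa [hb] at h1
      · rw [hb] at h1
        exact List.IsPrefix.trans ⟨[b], rfl⟩ h1
    · obtain ⟨x₂, x₀, rfl, hx0, hR⟩ := gWire_some hw2
      rw [Option.some_inj] at hx0
      subst hx0
      have hb := wireR_box hR
      have h1 := ih2 x₂ rfl zq hzq
      rcases hb with hb | ⟨b, hb⟩
      · rwa [hb] at h1
      · rw [hb] at h1
        exact List.IsPrefix.trans ⟨[b], rfl⟩ h1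
  | @cup g g' S hgt hw hc ih =>
    intro x hx zq hzq
    subst hx
    obtain ⟨x', x₀, rfl, hx0, hR⟩ := gWire_some hw
    rw [Option.some_inj] at hx0
    subst hx0
    have hb := wireR_box hR
    have h1 := ih x' rfl zq hzq
    rcases hb with hb | ⟨b, hb⟩
    · rwa [hb] at h1
    · rw [hb] at h1
      exact List.IsPrefix.trans ⟨[b], rfl⟩ h1

lemma prefix_false_true {p n : BPos} (h₁ : p ++ [false] <+: n) (h₂ : p ++ [true] <+: n) :
    False := by
  obtain ⟨r₁, hr₁⟩ := h₁
  obtain ⟨r₂, hr₂⟩ := h₂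
  rw [← hr₂] at hr₁
  simp only [List.append_assoc, List.singleton_append, List.append_cancel_left_eq] at hr₁
  cases hr₁

lemma union_decomp {S₀ S₁ A₀ A₁ : Set (X × BPos)} {p : BPos}
    (hS : S₀ ∪ S₁ = A₀ ∪ A₁)
    (h0 : ∀ zq ∈ S₀, p ++ [false] <+: zq.2) (h1 : ∀ zq ∈ S₁, p ++ [true] <+: zq.2)
    (g0 : ∀ zq ∈ A₀, p ++ [false] <+: zq.2) (g1 : ∀ zq ∈ A₁, p ++ [true] <+: zq.2) :
    S₀ = A₀ ∧ S₁ = A₁ := by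
  constructor
  · ext zq
    constructor
    · intro h
      rcases (Set.ext_iff.1 hS zq).1 (Or.inl h) with h' | h'
      · exact h'
      · exact absurd (g1 zq h') (fun hh => prefix_false_true (h0 zq h) hh)
    · intro h
      rcases (Set.ext_iff.1 hS zq).2 (Or.inl h) with h' | h'
      · exact h'
      · exact absurd (h1 zq h') (fun hh => prefix_false_true (g0 zq h) hh)
  · ext zq
    constructor
    · intro h
      rcases (Set.ext_iff.1 hS zq).1 (Or.inr h) with h' | h'
      · exact absurd (g0 zq h') (fun hh => prefix_false_true hh (h1 zq h))
      · exact h'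
    · intro h
      rcases (Set.ext_iff.1 hS zq).2 (Or.inr h) with h' | h'
      · exact absurd (h0 zq h') (fun hh => prefix_false_true hh (g1 zq h))
      · exact h'

open Classical in
noncomputable def gammaG (A : TVA L X Q) (T : BTree L) (p : BPos) (q : Q) : GT A T :=
  if h : EmptyReach A T p q then some ⟨(p, GK.tp), by obtain ⟨t, ht, -⟩ := h; rw [GValid, ht]; rfl⟩
  else if h' : LiveOne A T p q then some ⟨(p, GK.gam q), h'⟩
  else none

lemma gammaG_liveOne (hA : Homogenized A) {p : BPos} {q : Q} (h : LiveOne A T p q) :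
    gammaG A T p q = some ⟨(p, GK.gam q), h⟩ := by
  rw [gammaG, dif_neg (not_emptyReach_of_liveOne hA h), dif_pos h]

end Inv
section Inv2

variable {L X Q : Type} {A : TVA L X Q} {T : BTree L} {hA : Homogenized A}

lemma subtype_eta {α : Type*} {P : α → Prop} (x : {a // P a}) {v : α} (h : x.1 = v) :
    x = ⟨v, h ▸ x.2⟩ := Subtype.ext h

lemma captures_times_inv {p : BPos} {q₁ q₂ : Q} {hv : GValid A T (p, GK.tm q₁ q₂)}
    {S : Set (X × BPos)}
    (h : Captures (circ A T hA) (some ⟨(p, GK.tm q₁ q₂), hv⟩) S) :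
    ∃ (S₁ S₂ : Set (X × BPos)) (hv₁ : GValid A T (p ++ [false], GK.gam q₁))
      (hv₂ : GValid A T (p ++ [true], GK.gam q₂)), S = S₁ ∪ S₂ ∧
      Captures (circ A T hA) (some ⟨(p ++ [false], GK.gam q₁), hv₁⟩) S₁ ∧
      Captures (circ A T hA) (some ⟨(p ++ [true], GK.gam q₂), hv₂⟩) S₂ := by
  have hwinv : ∀ g', gWire A T g' (some ⟨(p, GK.tm q₁ q₂), hv⟩) →
      (∃ hv₁, g' = some ⟨(p ++ [false], GK.gam q₁), hv₁⟩) ∨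
      (∃ hv₂, g' = some ⟨(p ++ [true], GK.gam q₂), hv₂⟩) := by
    intro g' hw
    obtain ⟨x', x, rfl, hx, hR⟩ := gWire_some hw
    rw [Option.some_inj] at hx
    subst hx
    rcases hR with ⟨p', S', q', l', h1, h2, -⟩ | ⟨p', q₁', q₂', q', l', t₁', t₂', h1, h2, -⟩ |
      ⟨p', q', qq, l', t₁', t₂', q₂', h1, h2, -⟩ | ⟨p', q', qq, l', t₁', t₂', q₁', h1, h2, -⟩ |
      ⟨p', q₁', q₂', h1, h2⟩ | ⟨p', q₁', q₂', h1, h2⟩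
    · exact absurd h2 (by simp)
    · exact absurd h2 (by simp)
    · exact absurd h2 (by simp)
    · exact absurd h2 (by simp)
    · injection h2 with ha hb
      injection hb with hb1 hb2
      subst ha; subst hb1; subst hb2
      exact Or.inl ⟨h1 ▸ x'.2, congrArg some (subtype_eta x' h1)⟩
    · injection h2 with ha hb
      injection hb with hb1 hb2
      subst ha; subst hb1; subst hb2
      exact Or.inr ⟨h1 ▸ x'.2, congrArg some (subtype_eta x' h1)⟩
  cases h with
  | var h => exact absurd h (by simp [circ, gType, gkType])
  | top h => exact absurd h (by simp [circ, gType, gkType])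
  | cup h hw hc => exact absurd h (by simp [circ, gType, gkType])
  | @times _ g₁ g₂ S₁ S₂ hgt hw1 hw2 hne hc1 hc2 =>
    rcases hwinv g₁ hw1 with ⟨hv₁, rfl⟩ | ⟨hv₂, rfl⟩ <;>
      rcases hwinv g₂ hw2 with ⟨hv₁', rfl⟩ | ⟨hv₂', rfl⟩
    · exact absurd rfl hne
    · exact ⟨S₁, S₂, hv₁, hv₂', rfl, hc1, hc2⟩
    · exact ⟨S₂, S₁, hv₁', hv₂, Set.union_comm _ _, hc2, hc1⟩
    · exact absurd rfl hne

lemma assign_prefix {T : BTree L} {r : BPos} {ν : BPos → Set X} :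
    ∀ zq ∈ assignBelow T r ν, r <+: zq.2 := fun _ h => h.1

lemma correct_empty (hA : Homogenized A) {p : BPos} {t : BTree L} {q : Q}
    (hp : T.subt p = some t) (h1 : EmptyReach A T p q)
    {hv : GValid A T (p, GK.tp)} (ν : BPos → Set X) :
    Captures (circ A T hA) (some ⟨(p, GK.tp), hv⟩) (assignBelow T p ν) ↔
      ReachAbs A ν t p q := by
  constructor
  · intro hc
    have hS := captures_top_eq hc
    obtain ⟨t', ht', hr'⟩ := h1
    rw [hp, Option.some_inj] at ht'
    subst ht'
    refine reach_congr hr' ?_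
    intro r l' hrl
    exact assign_nu_empty hp hS r l' hrl
  · intro hr
    obtain ⟨t', ht', hr'⟩ := h1
    have hz : ZeroState A q := ⟨t', reach_root_of_pos hr'⟩
    have he : assignBelow T p ν = ∅ := empty_assign_of_zero hA hp hr hz
    rw [he]
    exact Captures.top rfl

lemma correct_dead (hA : Homogenized A) {p : BPos} {t : BTree L} {q : Q}
    (hp : T.subt p = some t) (h1 : ¬ EmptyReach A T p q) (h2 : ¬ LiveOne A T p q)
    (ν : BPos → Set X) :
    Captures (circ A T hA) (none : GT A T) (assignBelow T p ν) ↔ ReachAbs A ν t p q := by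
  constructor
  · intro hc; exact absurd hc (captures_none _)
  · intro hr
    exfalso
    rcases (hA q).1 with hz | ho
    · exact h1 (emptyReach_of_zero_live hA hp hr hz)
    · exact h2 ⟨⟨t, ν, hp, hr⟩, ho⟩

end Inv2
section Main

variable {L X Q : Type} {A : TVA L X Q} {T : BTree L}

lemma gamma_correct (hA : Homogenized A) :
    ∀ (t : BTree L) (p : BPos), T.subt p = some t → ∀ (q : Q) (ν : BPos → Set X),
      Captures (circ A T hA) (gammaG A T p q) (assignBelow T p ν) ↔ ReachAbs A ν t p q := by
  intro t
  induction t with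
  | leaf l =>
    intro p hp q ν
    rw [gammaG]
    split_ifs with h1 h2
    · exact correct_empty hA hp h1 ν
    · -- LiveOne, leaf case
      constructor
      · intro hc
        obtain ⟨g', hw, hcg⟩ := captures_cup_inv hc
        obtain ⟨x', x, rfl, hx, hR⟩ := gWire_some hw
        rw [Option.some_inj] at hx
        subst hx
        rcases hR with ⟨p', S', q', l', h1', h2', hpl, hinit⟩ |
          ⟨p', q₁', q₂', q', l', t₁', t₂', h1', h2', hpl, -⟩ |
          ⟨p', q', qq, l', t₁', t₂', q₂', h1', h2', hpl, -⟩ |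
          ⟨p', q', qq, l', t₁', t₂', q₁', h1', h2', hpl, -⟩ |
          ⟨p', q₁', q₂', h1', h2'⟩ | ⟨p', q₁', q₂', h1', h2'⟩
        · injection h2' with ha hb
          injection hb with hq
          subst ha; subst hq
          rw [hp, Option.some_inj] at hpl
          injection hpl with hl
          subst hl
          rw [subtype_eta x' h1'] at hcg
          have hSeq := captures_var_eq hcg
          rw [assign_leaf hp] at hSeq
          have hS' : S' = ν p := by
            ext z
            constructor
            · intro hz
              exact ((Set.ext_iff.1 hSeq (z, p)).2 ⟨hz, rfl⟩).1
            · intro hz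
              exact ((Set.ext_iff.1 hSeq (z, p)).1 ⟨hz, rfl⟩).1
          subst hS'
          exact ReachAbs.leaf hinit
        · injection h2' with ha hb
          injection hb with hq
          subst ha
          rw [hp] at hpl; simp at hpl
        · injection h2' with ha hb
          subst ha
          rw [hp] at hpl; simp at hpl
        · injection h2' with ha hb
          subst ha
          rw [hp] at hpl; simp at hpl
        · injection h2' with ha hb; cases hb
        · injection h2' with ha hb; cases hb
      · intro hr
        cases hr with
        | leaf hinit =>
          have hne : (ν p).Nonempty := by
            have hn := nonempty_assign_of_one hA hp (ReachAbs.leaf hinit) h2.2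
            rw [assign_leaf hp] at hn
            obtain ⟨⟨z, n⟩, hz, -⟩ := hn
            exact ⟨z, hz⟩
          refine Captures.cup rfl
            (g' := some ⟨(p, GK.vr (ν p)), ⟨l, hp, hne, q, hinit⟩⟩) ?_ ?_
          · exact Or.inl ⟨p, ν p, q, l, rfl, rfl, hp, hinit⟩
          · rw [assign_leaf hp]
            exact Captures.var rfl
    · exact correct_dead hA hp h1 h2 ν
  | node l t₁ t₂ ih₁ ih₂ =>
    intro p hp q ν
    have hp1 : T.subt (p ++ [false]) = some t₁ := subt_child_false hp
    have hp2 : T.subt (p ++ [true]) = some t₂ := subt_child_true hp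
    rw [gammaG]
    split_ifs with h1 h2
    · exact correct_empty hA hp h1 ν
    · constructor
      · intro hc
        obtain ⟨g', hw, hcg⟩ := captures_cup_inv hc
        obtain ⟨x', x, rfl, hx, hR⟩ := gWire_some hw
        rw [Option.some_inj] at hx
        subst hx
        rcases hR with ⟨p', S', q', l', h1', h2', hpl, hinit⟩ |
          ⟨p', q₁', q₂', q', l', t₁', t₂', h1', h2', hpl, htr⟩ |
          ⟨p', q', qq, l', t₁', t₂', q₂', h1', h2', hpl, htr, hE⟩ |
          ⟨p', q', qq, l', t₁', t₂', q₁', h1', h2', hpl, htr, hE⟩ |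
          ⟨p', q₁', q₂', h1', h2'⟩ | ⟨p', q₁', q₂', h1', h2'⟩
        · injection h2' with ha hb
          subst ha
          rw [hp] at hpl; simp at hpl
        · -- times input
          injection h2' with ha hb
          injection hb with hq
          subst ha; subst hq
          rw [hp, Option.some_inj] at hpl
          injection hpl with hl he1 he2
          subst hl; subst he1; subst he2
          rw [subtype_eta x' h1'] at hcg
          obtain ⟨S₁, S₂, hv₁, hv₂, hSu, hc1, hc2⟩ := captures_times_inv hcg
          rw [assign_node hp] at hSu
          obtain ⟨hS1, hS2⟩ := union_decomp hSu assign_prefix assign_prefix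
            (captures_prefix hc1 _ rfl) (captures_prefix hc2 _ rfl)
          rw [← hS1] at hc1
          rw [← hS2] at hc2
          rw [← gammaG_liveOne hA hv₁] at hc1
          rw [← gammaG_liveOne hA hv₂] at hc2
          exact ReachAbs.node ((ih₁ _ hp1 _ ν).1 hc1) ((ih₂ _ hp2 _ ν).1 hc2) htr
        · -- left gam input, right empty
          injection h2' with ha hb
          injection hb with hq
          subst ha; subst hq
          rw [hp, Option.some_inj] at hpl
          injection hpl with hl he1 he2
          subst hl; subst he1; subst he2
          rw [subtype_eta x' h1'] at hcg
          have hpre := captures_prefix hcg _ rfl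
          rw [assign_node hp] at hcg hpre
          have hA1 : assignBelow T (p ++ [true]) ν = ∅ := by
            ext zq
            simp only [Set.mem_empty_iff_false, iff_false]
            intro hzq
            exact prefix_false_true (hpre zq (Or.inr hzq)) (assign_prefix zq hzq)
          rw [hA1, Set.union_empty] at hcg
          have hv' : GValid A T (p ++ [false], GK.gam q') := by rw [← h1']; exact x'.2
          rw [← gammaG_liveOne hA hv'] at hcg
          have hr1 := (ih₁ _ hp1 _ ν).1 hcg
          obtain ⟨t', ht', hre⟩ := hE
          rw [hp2, Option.some_inj] at ht'
          subst ht'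
          have hr2 : ReachAbs A ν t₂ (p ++ [true]) q₂' := by
            refine reach_congr hre ?_
            intro r l' hrl
            exact assign_nu_empty hp2 hA1 r l' hrl
          exact ReachAbs.node hr1 hr2 htr
        · -- right gam input, left empty
          injection h2' with ha hb
          injection hb with hq
          subst ha; subst hq
          rw [hp, Option.some_inj] at hpl
          injection hpl with hl he1 he2
          subst hl; subst he1; subst he2
          rw [subtype_eta x' h1'] at hcg
          have hpre := captures_prefix hcg _ rfl
          rw [assign_node hp] at hcg hpre
          have hA0 : assignBelow T (p ++ [false]) ν = ∅ := by
            ext zq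
            simp only [Set.mem_empty_iff_false, iff_false]
            intro hzq
            exact prefix_false_true (assign_prefix zq hzq) (hpre zq (Or.inl hzq))
          rw [hA0, Set.empty_union] at hcg
          have hv' : GValid A T (p ++ [true], GK.gam q') := by rw [← h1']; exact x'.2
          rw [← gammaG_liveOne hA hv'] at hcg
          have hr2 := (ih₂ _ hp2 _ ν).1 hcg
          obtain ⟨t', ht', hre⟩ := hE
          rw [hp1, Option.some_inj] at ht'
          subst ht'
          have hr1 : ReachAbs A ν t₁ (p ++ [false]) q₁' := by
            refine reach_congr hre ?_
            intro r l' hrl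
            exact assign_nu_empty hp1 hA0 r l' hrl
          exact ReachAbs.node hr1 hr2 htr
        · injection h2' with ha hb; cases hb
        · injection h2' with ha hb; cases hb
      · intro hr
        cases hr with
        | @node _ _ _ _ q₁ q₂ _ hr1 hr2 htr =>
          have hL1 : Live A T (p ++ [false]) q₁ := ⟨t₁, ν, hp1, hr1⟩
          have hL2 : Live A T (p ++ [true]) q₂ := ⟨t₂, ν, hp2, hr2⟩
          rcases (hA q₁).1 with hz1 | ho1
          · rcases (hA q₂).1 with hz2 | ho2
            · exfalso
              have e1 := empty_assign_of_zero hA hp1 hr1 hz1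
              have e2 := empty_assign_of_zero hA hp2 hr2 hz2
              have he : assignBelow T p ν = ∅ := by
                rw [assign_node hp, e1, e2]; simp
              exact (hA q).2 ⟨zeroState_of_reach hp (ReachAbs.node hr1 hr2 htr) he, h2.2⟩
            · -- left zero, right one
              have e1 := empty_assign_of_zero hA hp1 hr1 hz1
              have hv₂ : GValid A T (p ++ [true], GK.gam q₂) := ⟨hL2, ho2⟩
              refine Captures.cup rfl (g' := some ⟨(p ++ [true], GK.gam q₂), hv₂⟩) ?_ ?_
              · exact Or.inr (Or.inr (Or.inr (Or.inl ⟨p, q₂, q, l, t₁, t₂, q₁, rfl, rfl, hp,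
                  htr, emptyReach_of_zero_live hA hp1 hr1 hz1⟩)))
              · have : assignBelow T p ν = assignBelow T (p ++ [true]) ν := by
                  rw [assign_node hp, e1, Set.empty_union]
                rw [this, ← gammaG_liveOne hA hv₂]
                exact (ih₂ _ hp2 _ ν).2 hr2
          · rcases (hA q₂).1 with hz2 | ho2
            · -- left one, right zero
              have e2 := empty_assign_of_zero hA hp2 hr2 hz2
              have hv₁ : GValid A T (p ++ [false], GK.gam q₁) := ⟨hL1, ho1⟩
              refine Captures.cup rfl (g' := some ⟨(p ++ [false], GK.gam q₁), hv₁⟩) ?_ ?_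
              · exact Or.inr (Or.inr (Or.inl ⟨p, q₁, q, l, t₁, t₂, q₂, rfl, rfl, hp,
                  htr, emptyReach_of_zero_live hA hp2 hr2 hz2⟩))
              · have : assignBelow T p ν = assignBelow T (p ++ [false]) ν := by
                  rw [assign_node hp, e2, Set.union_empty]
                rw [this, ← gammaG_liveOne hA hv₁]
                exact (ih₁ _ hp1 _ ν).2 hr1
            · -- both one
              have hv₁ : GValid A T (p ++ [false], GK.gam q₁) := ⟨hL1, ho1⟩
              have hv₂ : GValid A T (p ++ [true], GK.gam q₂) := ⟨hL2, ho2⟩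
              have hvt : GValid A T (p, GK.tm q₁ q₂) :=
                ⟨l, t₁, t₂, hp, ⟨hL1, ho1⟩, ⟨hL2, ho2⟩, q, htr⟩
              refine Captures.cup rfl (g' := some ⟨(p, GK.tm q₁ q₂), hvt⟩) ?_ ?_
              · exact Or.inr (Or.inl ⟨p, q₁, q₂, q, l, t₁, t₂, rfl, rfl, hp, htr⟩)
              · rw [assign_node hp]
                refine Captures.times rfl
                  (g₁ := some ⟨(p ++ [false], GK.gam q₁), hv₁⟩)
                  (g₂ := some ⟨(p ++ [true], GK.gam q₂), hv₂⟩) ?_ ?_ ?_ ?_ ?_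
                · exact Or.inr (Or.inr (Or.inr (Or.inr (Or.inl ⟨p, q₁, q₂, rfl, rfl⟩))))
                · exact Or.inr (Or.inr (Or.inr (Or.inr (Or.inr ⟨p, q₁, q₂, rfl, rfl⟩))))
                · intro hcontra
                  simp only [Option.some.injEq, Subtype.mk.injEq, Prod.mk.injEq] at hcontra
                  have := hcontra.1
                  simp at this
                · rw [← gammaG_liveOne hA hv₁]
                  exact (ih₁ _ hp1 _ ν).2 hr1
                · rw [← gammaG_liveOne hA hv₂]
                  exact (ih₂ _ hp2 _ ν).2 hr2
    · exact correct_dead hA hp h1 h2 ν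

end Main
section Dnnf

variable {L X Q : Type}

lemma vsub_nil {V : Type} (v : VTree V) : v.sub [] = some v := by cases v <;> rfl

def gSigma (A : TVA L X Q) (T : BTree L) : GT A T → BPos
  | none => []
  | some x => x.1.1

lemma valid_isSome {A : TVA L X Q} {T : BTree L} {x : BPos × GK X Q}
    (h : GValid A T x) : (T.subt x.1).isSome := by
  obtain ⟨p, k⟩ := x
  cases k with
  | gam q => obtain ⟨⟨t, ν, hp, -⟩, -⟩ := h; rw [hp]; rfl
  | tp => exact h
  | vr S => obtain ⟨l, hp, -⟩ := h; rw [hp]; rfl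
  | tm q₁ q₂ => obtain ⟨l, t₁, t₂, hp, -⟩ := h; rw [hp]; rfl

noncomputable def dnnf (A : TVA L X Q) (T : BTree L) (hA : Homogenized A) :
    StructuredDNNF (X × BPos) (GT A T) where
  toSetCircuit := circ A T hA
  vtree := vtreeOf X T []
  σ := gSigma A T
  σ_valid := by
    intro g
    match g with
    | none =>
      show ((vtreeOf X T []).sub []).isSome = true
      rw [vsub_nil]; rfl
    | some x =>
      have h := valid_isSome x.2
      obtain ⟨t, ht⟩ := Option.isSome_iff_exists.1 h
      rw [show gSigma A T (some x) = x.1.1 from rfl, vtreeOf_sub X x.1.1 T [] t ht]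
      rfl
  var_leaf := by
    intro g hg
    obtain ⟨p, S, hv, rfl⟩ := gtype_var_shape hg
    obtain ⟨l, hp, -, -⟩ := hv
    refine ⟨{zq : X × BPos | zq.2 = p}, ?_, ?_⟩
    · show (vtreeOf X T []).sub p = _
      rw [vtreeOf_sub X p T [] (BTree.leaf l) hp]
      simp [vtreeOf]
    · rintro ⟨z, n⟩ ⟨-, h2⟩
      exact h2
  var_nonempty := by
    intro g hg
    obtain ⟨p, S, hv, rfl⟩ := gtype_var_shape hg
    obtain ⟨l, hp, ⟨z, hz⟩, -⟩ := hv
    exact ⟨(z, p), hz, rfl⟩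
  wire_struct := by
    intro g' g hw
    obtain ⟨x', x, rfl, rfl, hR⟩ := gWire_some hw
    rcases hR with ⟨p, S, q, l, h1, h2, -⟩ | ⟨p, q₁, q₂, q, l, t₁, t₂, h1, h2, -⟩ |
      ⟨p, q', q, l, t₁, t₂, q₂, h1, h2, -⟩ | ⟨p, q', q, l, t₁, t₂, q₁, h1, h2, -⟩ |
      ⟨p, q₁, q₂, h1, h2⟩ | ⟨p, q₁, q₂, h1, h2⟩
    · left; show x'.1.1 = x.1.1; rw [h1, h2]
    · left; show x'.1.1 = x.1.1; rw [h1, h2]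
    · right
      refine ⟨?_, false, ?_⟩
      · show gType A T (some x') = GateType.cup
        rw [show gType A T (some x') = gkType x'.1.2 from rfl, h1]
        rfl
      · show x'.1.1 = x.1.1 ++ [false]; rw [h1, h2]
    · right
      refine ⟨?_, true, ?_⟩
      · show gType A T (some x') = GateType.cup
        rw [show gType A T (some x') = gkType x'.1.2 from rfl, h1]
        rfl
      · show x'.1.1 = x.1.1 ++ [true]; rw [h1, h2]
    · right
      refine ⟨?_, false, ?_⟩
      · show gType A T (some x') = GateType.cup
        rw [show gType A T (some x') = gkType x'.1.2 from rfl, h1]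
        rfl
      · show x'.1.1 = x.1.1 ++ [false]; rw [h1, h2]
    · right
      refine ⟨?_, true, ?_⟩
      · show gType A T (some x') = GateType.cup
        rw [show gType A T (some x') = gkType x'.1.2 from rfl, h1]
        rfl
      · show x'.1.1 = x.1.1 ++ [true]; rw [h1, h2]
  times_children := by
    intro g hg
    obtain ⟨p, q₁, q₂, hv, rfl⟩ := gtype_times_shape hg
    obtain ⟨l, t₁, t₂, hp, hL1, hL2, -⟩ := id hv
    constructor
    · exact ⟨some ⟨(p ++ [false], GK.gam q₁), hL1⟩,
        Or.inr (Or.inr (Or.inr (Or.inr (Or.inl ⟨p, q₁, q₂, rfl, rfl⟩)))), rfl⟩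
    · exact ⟨some ⟨(p ++ [true], GK.gam q₂), hL2⟩,
        Or.inr (Or.inr (Or.inr (Or.inr (Or.inr ⟨p, q₁, q₂, rfl, rfl⟩)))), rfl⟩
  leaves_disjoint := by
    intro p₁ p₂ vs₁ vs₂ h1 h2 hne
    have e1 := vtreeOf_sub_leaf X T [] p₁ vs₁ h1
    have e2 := vtreeOf_sub_leaf X T [] p₂ vs₂ h2
    simp only [List.nil_append] at e1 e2
    rw [e1, e2]
    rw [Set.disjoint_left]
    rintro ⟨z, n⟩ hm1 hm2
    simp only [Set.mem_setOf_eq] at hm1 hm2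
    exact hne (hm1.symm.trans hm2)

end Dnnf
section Count

variable {L X Q : Type}

def posList : BTree L → List BPos
  | BTree.leaf _ => [[]]
  | BTree.node _ t₁ t₂ =>
      [] :: ((posList t₁).map (List.cons false) ++ (posList t₂).map (List.cons true))

lemma mem_posList : ∀ (T : BTree L) (p : BPos), p ∈ posList T ↔ (T.subt p).isSome := by
  intro T
  induction T with
  | leaf l =>
    intro p
    cases p with
    | nil => simp [posList, BTree.subt]
    | cons b p => simp [posList, BTree.subt]
  | node l t₁ t₂ ih₁ ih₂ =>
    intro p
    cases p with
    | nil => simp [posList, BTree.subt]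
    | cons b p =>
      cases b with
      | false => simp [posList, BTree.subt, ih₁, ih₂]
      | true => simp [posList, BTree.subt, ih₁, ih₂]

lemma posList_nodup : ∀ T : BTree L, (posList T).Nodup := by
  intro T
  induction T with
  | leaf l => simp [posList]
  | node l t₁ t₂ ih₁ ih₂ =>
    refine List.Nodup.cons ?_ (List.Nodup.append ?_ ?_ ?_)
    · intro h
      rcases List.mem_append.1 h with h | h <;>
        · obtain ⟨a, -, ha⟩ := List.mem_map.1 h
          cases ha
    · exact ih₁.map (fun a b h => by injection h)
    · exact ih₂.map (fun a b h => by injection h)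
    · intro a ha hb
      obtain ⟨a₁, -, ha₁⟩ := List.mem_map.1 ha
      obtain ⟨a₂, -, ha₂⟩ := List.mem_map.1 hb
      rw [← ha₁] at ha₂
      simp at ha₂

lemma posList_length : ∀ T : BTree L, (posList T).length = T.size := by
  intro T
  induction T with
  | leaf l => rfl
  | node l t₁ t₂ ih₁ ih₂ =>
    simp only [posList, List.length_cons, List.length_append, List.length_map,
      BTree.size, ih₁, ih₂]

lemma size_pos (T : BTree L) : 1 ≤ T.size := by
  cases T <;> simp [BTree.size] <;> omega

noncomputable def initOf (A : TVA L X Q) (T : BTree L) (p : BPos) (S : Set X)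
    (h : GValid A T (p, GK.vr S)) : {t : L × Set X × Q // A.init t.1 t.2.1 t.2.2} :=
  ⟨(h.choose, S, (h.choose_spec.2.2).choose), (h.choose_spec.2.2).choose_spec⟩

noncomputable def transOf (A : TVA L X Q) (T : BTree L) (p : BPos) (q₁ q₂ : Q)
    (h : GValid A T (p, GK.tm q₁ q₂)) :
    {t : L × Q × Q × Q // A.trans t.1 t.2.1 t.2.2.1 t.2.2.2} :=
  ⟨(h.choose, q₁, q₂,
      (h.choose_spec.choose_spec.choose_spec.2.2.2).choose),
    (h.choose_spec.choose_spec.choose_spec.2.2.2).choose_spec⟩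

noncomputable def encode (A : TVA L X Q) (T : BTree L) :
    GT A T → Option (({p : BPos // (T.subt p).isSome} × Q) ⊕
      {p : BPos // (T.subt p).isSome} ⊕
      ({p : BPos // (T.subt p).isSome} × {t : L × Set X × Q // A.init t.1 t.2.1 t.2.2}) ⊕
      ({p : BPos // (T.subt p).isSome} × {t : L × Q × Q × Q // A.trans t.1 t.2.1 t.2.2.1 t.2.2.2}))
  | none => none
  | some ⟨(p, GK.gam q), h⟩ => some (Sum.inl (⟨p, valid_isSome h⟩, q))
  | some ⟨(p, GK.tp), h⟩ => some (Sum.inr (Sum.inl ⟨p, h⟩))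
  | some ⟨(p, GK.vr S), h⟩ =>
      some (Sum.inr (Sum.inr (Sum.inl (⟨p, valid_isSome h⟩, initOf A T p S h))))
  | some ⟨(p, GK.tm q₁ q₂), h⟩ =>
      some (Sum.inr (Sum.inr (Sum.inr (⟨p, valid_isSome h⟩, transOf A T p q₁ q₂ h))))

lemma encode_inj (A : TVA L X Q) (T : BTree L) : Function.Injective (encode A T) := by
  intro g g' h
  rcases g with - | ⟨⟨p, k⟩, hv⟩ <;> rcases g' with - | ⟨⟨p', k'⟩, hv'⟩
  · rfl
  · cases k' <;> simp [encode] at h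
  · cases k <;> simp [encode] at h
  · cases k <;> cases k' <;>
      simp only [encode, Option.some.injEq, Sum.inl.injEq, Sum.inr.injEq, Prod.mk.injEq,
        Subtype.mk.injEq, reduceCtorEq] at h
    case gam.gam q q' =>
      obtain ⟨rfl, rfl⟩ := h; rfl
    case tp.tp =>
      obtain rfl := congrArg Subtype.val h; rfl
    case vr.vr S S' =>
      obtain ⟨rfl, h2⟩ := h
      have hS : S = S' := congrArg (fun t => t.1.2.1) h2
      subst hS; rfl
    case tm.tm q₁ q₂ q₁' q₂' =>
      obtain ⟨rfl, h2⟩ := h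
      have e1 : q₁ = q₁' := congrArg (fun t => t.1.2.1) h2
      have e2 : q₂ = q₂' := congrArg (fun t => t.1.2.2.1) h2
      subst e1; subst e2; rfl

def rank (A : TVA L X Q) (T : BTree L) : GT A T → ℕ
  | none => 0
  | some ⟨(p, GK.gam _), _⟩ => 3 * (T.height - p.length) + 2
  | some ⟨(p, GK.tm _ _), _⟩ => 3 * (T.height - p.length) + 1
  | some ⟨(_, GK.tp), _⟩ => 0
  | some ⟨(_, GK.vr _), _⟩ => 0

lemma rank_le' (A : TVA L X Q) (T : BTree L) (g : GT A T) :
    rank A T g ≤ 3 * T.height + 2 := by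
  rcases g with - | ⟨⟨p, k⟩, hv⟩
  · simp [rank]
  · cases k <;> simp [rank] <;> omega

lemma wire_rank {A : TVA L X Q} {T : BTree L} {g' g : GT A T} (h : gWire A T g' g) :
    rank A T g' < rank A T g := by
  obtain ⟨x', x, rfl, rfl, hR⟩ := gWire_some h
  have hlen' : x'.1.1.length ≤ T.height := length_le_height T _ (valid_isSome x'.2)
  rcases hR with ⟨p, S, q, l, h1, h2, -⟩ | ⟨p, q₁, q₂, q, l, t₁, t₂, h1, h2, -⟩ |
    ⟨p, q', q, l, t₁, t₂, q₂, h1, h2, -⟩ | ⟨p, q', q, l, t₁, t₂, q₁, h1, h2, -⟩ |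
    ⟨p, q₁, q₂, h1, h2⟩ | ⟨p, q₁, q₂, h1, h2⟩ <;>
    rw [subtype_eta x' h1, subtype_eta x h2] <;>
    rw [h1] at hlen' <;>
    simp only [rank, List.length_append, List.length_cons, List.length_nil] at hlen' ⊢ <;>
    omega

lemma wirePath_rank {A : TVA L X Q} {T : BTree L} {hA : Homogenized A} {g g' : GT A T} {n : ℕ}
    (h : WirePath (circ A T hA) g g' n) : n + rank A T g ≤ rank A T g' := by
  induction h with
  | refl => omega
  | @step g m g' n hw hp ih =>
    have := wire_rank (A := A) (T := T) hw
    omega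

lemma width_bound [Fintype Q] (A : TVA L X Q) (T : BTree L) (vp : BPos) :
    {g : GT A T | gType A T g = GateType.cup ∧ gSigma A T g = vp}.ncard ≤ Fintype.card Q := by
  classical
  have hshape : ∀ g ∈ {g : GT A T | gType A T g = GateType.cup ∧ gSigma A T g = vp},
      ∃ (q : Q) (hv : GValid A T (vp, GK.gam q)), g = some ⟨(vp, GK.gam q), hv⟩ := by
    rintro g ⟨hc, hs⟩
    obtain ⟨p, q, hv, rfl⟩ := gtype_cup_shape hc
    have hp : p = vp := hs
    subst hp
    exact ⟨q, hv, rfl⟩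
  have : Nat.card {g : GT A T // g ∈ {g : GT A T | gType A T g = GateType.cup ∧ gSigma A T g = vp}}
      ≤ Nat.card Q := by
    refine Nat.card_le_card_of_injective
      (fun gg => (hshape gg.1 gg.2).choose) ?_
    intro a b hab
    have hab' : (hshape a.1 a.2).choose = (hshape b.1 b.2).choose := hab
    obtain ⟨hva, ha⟩ := (hshape a.1 a.2).choose_spec
    obtain ⟨hvb, hb⟩ := (hshape b.1 b.2).choose_spec
    refine Subtype.ext ?_
    rw [ha, hb]
    have hval : ((vp, GK.gam (hshape a.1 a.2).choose) : BPos × GK X Q) =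
        (vp, GK.gam (hshape b.1 b.2).choose) := by rw [hab']
    exact congrArg some (Subtype.ext hval)
  rw [← Nat.card_coe_set_eq, ← Nat.card_eq_fintype_card]
  exact this

end Count
lemma arith_key (s q i r c : ℕ) (hs : 1 ≤ s) (hq : 1 ≤ q)
    (h : c ≤ s * q + (s + (s * i + s * r)) + 1) : c ≤ 4 * s * (q + i + r) := by
  have e : 4 * s * (q + i + r) = 4 * (s * q) + 4 * (s * i) + 4 * (s * r) := by ring
  have h1 : 1 * 1 ≤ s * q := Nat.mul_le_mul hs hq
  have h2 : s * 1 ≤ s * q := Nat.mul_le_mul_left s hq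
  simp only [one_mul, mul_one] at h1 h2
  rw [e]
  generalize s * q = a at h h1 h2 ⊢
  generalize s * i = b at h ⊢
  generalize s * r = d at h ⊢
  omega

/-- for every binary tree `T` and homogenized TVA `A` one can build an
assignment circuit of `A` on `T`: a complete structured DNNF `C` (structured by the
v-tree isomorphic to `T`) of width at most `|Q|`, depth `O(height T)` and size
`O(|T| · |A|)`, with a gate `γ(n, q)` for each node `n` and state `q` capturing
exactly the assignments of the valuations `ν` for which some run of `A` on the
subtree rooted at `n` under `ν` maps `n` to `q`. -/
theorem stmt8 {L X Q : Type} [Fintype L] [Fintype X] [Fintype Q]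
    (A : TVA L X Q) (hA : Homogenized A) (T : BTree L) :
    ∃ (G : Type) (_ : Fintype G) (D : StructuredDNNF (X × BPos) G) (γ : BPos → Q → G),
      D.vtree = vtreeOf X T [] ∧
      (∀ (p : BPos) (t : BTree L), T.subt p = some t → ∀ (q : Q) (ν : BPos → Set X),
        Captures D.toSetCircuit (γ p q) (assignBelow T p ν) ↔ ReachAbs A ν t p q) ∧
      (∀ vp : BPos,
        {g : G | D.gtype g = GateType.cup ∧ D.σ g = vp}.ncard ≤ Fintype.card Q) ∧
      (∀ (g g' : G) (n : ℕ), WirePath D.toSetCircuit g g' n → n ≤ 3 * (T.height + 1)) ∧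
      Fintype.card G ≤ 4 * T.size * (Fintype.card Q +
        {t : L × Set X × Q | A.init t.1 t.2.1 t.2.2}.ncard +
        {t : L × Q × Q × Q | A.trans t.1 t.2.1 t.2.2.1 t.2.2.2}.ncard) := by
  classical
  rcases isEmpty_or_nonempty Q with hQ | hQ
  · refine ⟨Empty, inferInstance,
      { gtype := fun g => g.elim
        wire := fun g _ => g.elim
        varLabel := fun g => g.elim
        varLabel_inj := fun g => g.elim
        source_no_input := fun g => g.elim
        const_no_output := fun g => g.elim
        times_two := fun g => g.elim
        cup_one := fun g => g.elim
        vtree := vtreeOf X T []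
        σ := fun g => g.elim
        σ_valid := fun g => g.elim
        var_leaf := fun g => g.elim
        var_nonempty := fun g => g.elim
        wire_struct := fun g' => g'.elim
        times_children := fun g => g.elim
        leaves_disjoint := ?_ },
      fun _ q => (hQ.false q).elim, rfl, ?_, ?_, ?_, ?_⟩
    · intro p₁ p₂ vs₁ vs₂ h1 h2 hne
      have e1 := vtreeOf_sub_leaf X T [] p₁ vs₁ h1
      have e2 := vtreeOf_sub_leaf X T [] p₂ vs₂ h2
      simp only [List.nil_append] at e1 e2
      rw [e1, e2, Set.disjoint_left]
      rintro ⟨z, n⟩ hm1 hm2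
      simp only [Set.mem_setOf_eq] at hm1 hm2
      exact hne (hm1.symm.trans hm2)
    · intro p t hpt q
      exact (hQ.false q).elim
    · intro vp
      rw [Set.eq_empty_of_isEmpty {g : Empty | _}]
      simp
    · intro g
      exact g.elim
    · simp
  · haveI instPos : Fintype {p : BPos // (T.subt p).isSome} :=
      Fintype.subtype (posList T).toFinset
        (by intro x; rw [List.mem_toFinset]; exact mem_posList T x)
    haveI instI : Fintype {t : L × Set X × Q // A.init t.1 t.2.1 t.2.2} :=
      Subtype.fintype _
    haveI instR : Fintype {t : L × Q × Q × Q // A.trans t.1 t.2.1 t.2.2.1 t.2.2.2} :=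
      Subtype.fintype _
    haveI instG : Fintype (GT A T) := Fintype.ofInjective (encode A T) (encode_inj A T)
    refine ⟨GT A T, instG, dnnf A T hA, gammaG A T, rfl, ?_, ?_, ?_, ?_⟩
    · intro p t hpt q ν
      exact gamma_correct hA t p hpt q ν
    · intro vp
      exact width_bound A T vp
    · intro g g' n hpath
      have h1 := wirePath_rank (hA := hA) hpath
      have h2 := rank_le' A T g'
      omega
    · have hpos : Fintype.card {p : BPos // (T.subt p).isSome} = T.size := by
        rw [Fintype.card_of_subtype (posList T).toFinset
          (by intro x; rw [List.mem_toFinset]; exact mem_posList T x)]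
        rw [List.toFinset_card_of_nodup (posList_nodup T), posList_length]
      have hI : {t : L × Set X × Q | A.init t.1 t.2.1 t.2.2}.ncard =
          Nat.card {t : L × Set X × Q // A.init t.1 t.2.1 t.2.2} :=
        (Nat.card_coe_set_eq _).symm
      have hR : {t : L × Q × Q × Q | A.trans t.1 t.2.1 t.2.2.1 t.2.2.2}.ncard =
          Nat.card {t : L × Q × Q × Q // A.trans t.1 t.2.1 t.2.2.1 t.2.2.2} :=
        (Nat.card_coe_set_eq _).symm
      have hle : Fintype.card (GT A T) ≤
          T.size * Fintype.card Q +
            (T.size + (T.size * Nat.card {t : L × Set X × Q // A.init t.1 t.2.1 t.2.2} +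
              T.size * Nat.card {t : L × Q × Q × Q // A.trans t.1 t.2.1 t.2.2.1 t.2.2.2})) +
            1 := by
        have := Fintype.card_le_of_injective (encode A T) (encode_inj A T)
        rw [Fintype.card_option, Fintype.card_sum, Fintype.card_sum, Fintype.card_sum,
          Fintype.card_prod, Fintype.card_prod, Fintype.card_prod, hpos,
          ← Nat.card_eq_fintype_card (α := {t : L × Set X × Q // A.init t.1 t.2.1 t.2.2}),
          ← Nat.card_eq_fintype_card
            (α := {t : L × Q × Q × Q // A.trans t.1 t.2.1 t.2.2.1 t.2.2.2})] at this
        exact this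
      rw [hI, hR]
      exact arith_key _ _ _ _ _ (size_pos T) (Fintype.card_pos) hle
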